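/- Let X be a real Hilbert space, let M : X → 2^X be a maximally monotone operator with Z = zer M ≠ ∅, let x₀ ∈ X, and let (y_n, y_n*) be a sequence in gra M. For every n set x_{n+1/2} = x_n + (⟪y_n − x_n, y_n*⟫/‖y_n*‖²) y_n* if ⟪y_n − x_n, y_n*⟫ < 0 and x_{n+1/2} = x_n otherwise, and x_{n+1} = Q(x₀, x_n, x_{n+1/2}), the projection of x₀ onto H(x₀,x_n) ∩ H(x_n,x_{n+1/2}). Then: (i) Σ_n ‖x_{n+1} − x_n‖² < ∞ and Σ_n ‖x_{n+1/2} − x_n‖² < ∞; (ii) if every weak sequential cluster point of (x_n) belongs to Z, then (x_n) converges strongly to proj_Z x₀, the point of Z nearest x₀. -/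

import Mathlib

open Filter Topology RealInnerProductSpace

/-- The half-space `H(x,y) = {u : ⟪u - y, x - y⟫ ≤ 0}`. -/
def Hset {X : Type*} [NormedAddCommGroup X] [InnerProductSpace ℝ X] (x y : X) : Set X :=
  {u | ⟪u - y, x - y⟫ ≤ 0}

section Aux

variable {X : Type*} [NormedAddCommGroup X] [InnerProductSpace ℝ X]

lemma key_ineq (a b c : X) (h : ⟪c - b, a - b⟫ ≤ 0) :
    ‖a - b‖ ^ 2 + ‖c - b‖ ^ 2 ≤ ‖a - c‖ ^ 2 := by
  have h1 : a - c = (a - b) - (c - b) := by abel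
  have h2 : ‖(a - b) - (c - b)‖ ^ 2
      = ‖a - b‖ ^ 2 - 2 * ⟪a - b, c - b⟫ + ‖c - b‖ ^ 2 :=
    norm_sub_sq_real _ _
  have h3 : ⟪a - b, c - b⟫ = ⟪c - b, a - b⟫ := real_inner_comm _ _
  rw [h1, h2, h3]; linarith

lemma convex_Hset (x y : X) : Convex ℝ (Hset x y) := by
  have : Hset x y = {u | ⟪u, x - y⟫ ≤ ⟪y, x - y⟫} := by
    ext u
    simp only [Hset, Set.mem_setOf_eq, inner_sub_left, sub_nonpos, tsub_le_iff_right]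
    constructor <;> intro h <;> linarith
  rw [this]
  exact convex_halfSpace_le
    ⟨fun a b => inner_add_left a b _, fun r a => real_inner_smul_left a _ r⟩ _

/-- variational inequality for a minimizer over a convex set -/
lemma proj_vi {K : Set X} (hK : Convex ℝ K) {x₀ p : X} (hp : p ∈ K)
    (hmin : ∀ w ∈ K, ‖x₀ - p‖ ≤ ‖x₀ - w‖) :
    ∀ w ∈ K, ⟪x₀ - p, w - p⟫ ≤ 0 := by
  haveI : Nonempty K := ⟨⟨p, hp⟩⟩
  have heq : ‖x₀ - p‖ = ⨅ w : K, ‖x₀ - w‖ := by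
    apply le_antisymm
    · exact le_ciInf fun w => hmin w w.2
    · exact ciInf_le ⟨0, fun r ⟨w, hw⟩ => hw ▸ norm_nonneg _⟩ (⟨p, hp⟩ : K)
  exact (norm_eq_iInf_iff_real_inner_le_zero hK hp).mp heq

lemma halfstep_mem (z xn yn s : X) (hm : 0 ≤ ⟪yn - z, s⟫) :
    z ∈ Hset xn (if ⟪yn - xn, s⟫ < 0 then xn + (⟪yn - xn, s⟫ / ‖s‖ ^ 2) • s else xn) := by
  by_cases h : ⟪yn - xn, s⟫ < 0
  · rw [if_pos h]
    have hs : s ≠ 0 := by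
      rintro rfl
      simp at h
    have hN : (0:ℝ) < ‖s‖ ^ 2 := pow_pos (norm_pos_iff.mpr hs) 2
    set c : ℝ := ⟪yn - xn, s⟫ with hc
    set lam : ℝ := c / ‖s‖ ^ 2 with hlam
    have hlamneg : lam < 0 := div_neg_of_neg_of_pos h hN
    have hlamN : lam * ‖s‖ ^ 2 = c := div_mul_cancel₀ _ (ne_of_gt hN)
    show ⟪z - (xn + lam • s), xn - (xn + lam • s)⟫ ≤ 0
    have e1 : z - (xn + lam • s) = (z - xn) - lam • s := by abel
    have e2 : xn - (xn + lam • s) = -(lam • s) := by abel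
    rw [e1, e2, inner_neg_right, inner_sub_left, real_inner_smul_right,
      real_inner_smul_right, real_inner_smul_left, real_inner_self_eq_norm_sq]
    have hA : ⟪z - xn, s⟫ ≤ c := by
      have hsplit : ⟪z - xn, s⟫ = -⟪yn - z, s⟫ + c := by
        rw [hc]
        have h4 : z - xn = -(yn - z) + (yn - xn) := by abel
        rw [h4, inner_add_left, inner_neg_left]
      rw [hsplit]
      linarith
    nlinarith [mul_le_mul_of_nonpos_left hA hlamneg.le]
  · rw [if_neg h]
    show ⟪z - xn, xn - xn⟫ ≤ 0
    simp

lemma cauchySeq_of_unif_approx (h : ℕ → ℝ)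
    (H : ∀ ε : ℝ, 0 < ε → ∃ h' : ℕ → ℝ, CauchySeq h' ∧ ∀ n, |h n - h' n| ≤ ε) :
    CauchySeq h := by
  rw [Metric.cauchySeq_iff]
  intro ε hε
  obtain ⟨h', hc, happ⟩ := H (ε/4) (by linarith)
  rw [Metric.cauchySeq_iff] at hc
  obtain ⟨N, hN⟩ := hc (ε/4) (by linarith)
  refine ⟨N, fun m hm n hn => ?_⟩
  have h1 := happ m
  have h2 := happ n
  have h3 := hN m hm n hn
  rw [Real.dist_eq] at *
  have h4 : h m - h n = (h m - h' m) + (h' m - h' n) + (h' n - h n) := by ring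
  rw [h4]
  calc |(h m - h' m) + (h' m - h' n) + (h' n - h n)|
      ≤ |(h m - h' m) + (h' m - h' n)| + |h' n - h n| := abs_add_le _ _
    _ ≤ |h m - h' m| + |h' m - h' n| + |h' n - h n| := by
        have := abs_add_le (h m - h' m) (h' m - h' n); linarith
    _ < ε := by
        have h5 : |h' n - h n| = |h n - h' n| := abs_sub_comm _ _
        rw [h5]; linarith

theorem exists_weak_subseq [CompleteSpace X] (a : ℕ → X) (C : ℝ) (hC : ∀ n, ‖a n‖ ≤ C) :
    ∃ (z : X) (φ : ℕ → ℕ), StrictMono φ ∧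
      ∀ u : X, Tendsto (fun n => ⟪a (φ n), u⟫) atTop (𝓝 ⟪z, u⟫) := by
  have hC0 : 0 ≤ C := le_trans (norm_nonneg (a 0)) (hC 0)
  set K : Set (ℕ → ℝ) := Set.pi Set.univ (fun m => Set.Icc (-(C * ‖a m‖)) (C * ‖a m‖)) with hKdef
  have hK : IsCompact K := isCompact_univ_pi (fun m => isCompact_Icc)
  have hmem : ∀ n, (fun m => ⟪a n, a m⟫) ∈ K := by
    intro n m _
    have h1 : |⟪a n, a m⟫| ≤ ‖a n‖ * ‖a m‖ := abs_real_inner_le_norm _ _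
    have h2 : ‖a n‖ * ‖a m‖ ≤ C * ‖a m‖ :=
      mul_le_mul_of_nonneg_right (hC n) (norm_nonneg _)
    have := abs_le.mp (le_trans h1 h2)
    exact ⟨this.1, this.2⟩
  obtain ⟨L, -, φ, hφ, hLtend⟩ := hK.isSeqCompact hmem
  have hLm : ∀ m, Tendsto (fun n => ⟪a (φ n), a m⟫) atTop (𝓝 (L m)) := by
    intro m
    exact (tendsto_pi_nhds.mp hLtend) m
  set b : ℕ → X := fun n => a (φ n) with hbdef
  have key : ∀ u : X, CauchySeq (fun n => ⟪b n, u⟫) := by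
    set Y : Submodule ℝ X := Submodule.span ℝ (Set.range a) with hYdef
    have hspan : ∀ u ∈ Y, CauchySeq (fun n => ⟪b n, u⟫) := by
      intro u hu
      induction hu using Submodule.span_induction with
      | mem v hv =>
          obtain ⟨m, rfl⟩ := hv
          exact (hLm m).cauchySeq
      | zero => simpa using cauchySeq_const (0:ℝ)
      | add v w _ _ hv hw =>
          have := hv.add hw
          simpa [inner_add_right, Pi.add_def] using this
      | smul r v _ hv =>
          have := (uniformContinuous_const_smul r).comp_cauchySeq hv
          simpa [inner_smul_right, Function.comp_def] using this
    have hclos : ∀ u ∈ Y.topologicalClosure, CauchySeq (fun n => ⟪b n, u⟫) := by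
      intro u hu
      apply cauchySeq_of_unif_approx
      intro ε hε
      have hεC : 0 < ε / (C + 1) := by positivity
      have hu' : u ∈ closure (Y : Set X) := hu
      obtain ⟨v, hv, hdist⟩ := Metric.mem_closure_iff.mp hu' (ε / (C+1)) hεC
      refine ⟨fun n => ⟪b n, v⟫, hspan v hv, fun n => ?_⟩
      have h6 : ⟪b n, u⟫ - ⟪b n, v⟫ = ⟪b n, u - v⟫ := (inner_sub_right _ _ _).symm
      rw [h6]
      calc |⟪b n, u - v⟫| ≤ ‖b n‖ * ‖u - v‖ := abs_real_inner_le_norm _ _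
        _ ≤ C * ‖u - v‖ := mul_le_mul_of_nonneg_right (hC _) (norm_nonneg _)
        _ ≤ C * (ε / (C + 1)) := by
            apply mul_le_mul_of_nonneg_left _ hC0
            rw [← dist_eq_norm]; exact le_of_lt hdist
        _ ≤ ε := by
            rw [mul_div_assoc', div_le_iff₀ (by linarith : (0:ℝ) < C + 1)]
            nlinarith
    intro u
    haveI : CompleteSpace Y.topologicalClosure :=
      IsClosed.completeSpace_coe (hs := Y.isClosed_topologicalClosure)
    obtain ⟨v, hv, w, hw, rfl⟩ := Y.topologicalClosure.exists_add_mem_mem_orthogonal u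
    have hbw : ∀ n, ⟪b n, w⟫ = 0 := fun n =>
      Submodule.inner_right_of_mem_orthogonal
        (Submodule.le_topologicalClosure Y (Submodule.subset_span ⟨φ n, rfl⟩)) hw
    have := hclos v hv
    simpa [inner_add_right, hbw] using this
  have hex : ∀ u : X, ∃ r, Tendsto (fun n => ⟪b n, u⟫) atTop (𝓝 r) :=
    fun u => cauchySeq_tendsto_of_complete (key u)
  choose F hF using hex
  have hFadd : ∀ u v, F (u + v) = F u + F v := by
    intro u v
    have h1 : Tendsto (fun n => ⟪b n, u + v⟫) atTop (𝓝 (F u + F v)) := by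
      have := (hF u).add (hF v)
      simpa [inner_add_right] using this
    exact tendsto_nhds_unique (hF (u+v)) h1
  have hFsmul : ∀ (r : ℝ) u, F (r • u) = r * F u := by
    intro r u
    have h1 : Tendsto (fun n => ⟪b n, r • u⟫) atTop (𝓝 (r * F u)) := by
      have := (tendsto_const_nhds (x := r)).mul (hF u)
      simpa [inner_smul_right] using this
    exact tendsto_nhds_unique (hF (r • u)) h1
  have hFbound : ∀ u, |F u| ≤ C * ‖u‖ := by
    intro u
    have h1 : Tendsto (fun n => |⟪b n, u⟫|) atTop (𝓝 |F u|) := (hF u).abs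
    apply le_of_tendsto h1
    filter_upwards with n
    exact le_trans (abs_real_inner_le_norm _ _)
      (mul_le_mul_of_nonneg_right (hC _) (norm_nonneg _))
  set f : X →ₗ[ℝ] ℝ :=
    { toFun := F, map_add' := hFadd, map_smul' := hFsmul } with hfdef
  set g : X →L[ℝ] ℝ := f.mkContinuous C (fun u => by simpa [hfdef] using hFbound u) with hgdef
  refine ⟨(InnerProductSpace.toDual ℝ X).symm g, φ, hφ, fun u => ?_⟩
  have h7 : ⟪(InnerProductSpace.toDual ℝ X).symm g, u⟫ = g u :=
    InnerProductSpace.toDual_symm_apply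
  rw [h7]
  exact hF u

end Aux

/-- Proposition 4.8 (abstract strong convergence principle, Haugazeau-type). -/
theorem stmt_3
    {X : Type*} [NormedAddCommGroup X] [InnerProductSpace ℝ X] [CompleteSpace X]
    (M : X → Set X)
    (hMmono : ∀ x y u v, u ∈ M x → v ∈ M y → (0:ℝ) ≤ ⟪x - y, u - v⟫)
    (hMmax : ∀ A : X → Set X,
      (∀ x y u v, u ∈ A x → v ∈ A y → (0:ℝ) ≤ ⟪x - y, u - v⟫) →
      (∀ x, M x ⊆ A x) → ∀ x, A x ⊆ M x)
    (hZ : ∃ z, (0:X) ∈ M z)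
    (x₀ : X) (y ystar x xh : ℕ → X)
    (hgra : ∀ n, ystar n ∈ M (y n))
    (hx0 : x 0 = x₀)
    (hxh : ∀ n, xh n =
      if ⟪y n - x n, ystar n⟫ < 0 then
        x n + (⟪y n - x n, ystar n⟫ / ‖ystar n‖ ^ 2) • ystar n
      else x n)
    (hQ : ∀ n, x (n + 1) ∈ Hset x₀ (x n) ∩ Hset (x n) (xh n) ∧
      ∀ w ∈ Hset x₀ (x n) ∩ Hset (x n) (xh n), ‖x₀ - x (n + 1)‖ ≤ ‖x₀ - w‖) :
    (Summable (fun n => ‖x (n + 1) - x n‖ ^ 2) ∧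
      Summable (fun n => ‖xh n - x n‖ ^ 2)) ∧
    ((∀ (z : X) (φ : ℕ → ℕ), StrictMono φ →
        (∀ u : X, Tendsto (fun n => ⟪x (φ n), u⟫) atTop (𝓝 ⟪z, u⟫)) → (0:X) ∈ M z) →
      ∃ z, (0:X) ∈ M z ∧ (∀ w, (0:X) ∈ M w → ‖x₀ - z‖ ≤ ‖x₀ - w‖) ∧
        Tendsto x atTop (𝓝 z)) := by
  obtain ⟨z₀, hz₀⟩ := hZ
  have hmemH1 : ∀ n, x (n+1) ∈ Hset x₀ (x n) := fun n => ((hQ n).1).1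
  have hmemH2 : ∀ n, x (n+1) ∈ Hset (x n) (xh n) := fun n => ((hQ n).1).2
  have hconvD : ∀ n, Convex ℝ (Hset x₀ (x n) ∩ Hset (x n) (xh n)) :=
    fun n => (convex_Hset _ _).inter (convex_Hset _ _)
  have hproj : ∀ n, ∀ w ∈ Hset x₀ (x n) ∩ Hset (x n) (xh n),
      ⟪x₀ - x (n+1), w - x (n+1)⟫ ≤ 0 :=
    fun n => proj_vi (hconvD n) (hQ n).1 (hQ n).2
  have hH2 : ∀ z, (0:X) ∈ M z → ∀ n, z ∈ Hset (x n) (xh n) := by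
    intro z hz n
    have hm : 0 ≤ ⟪y n - z, ystar n⟫ := by
      have := hMmono (y n) z (ystar n) 0 (hgra n) hz
      simpa using this
    rw [hxh n]
    exact halfstep_mem z (x n) (y n) (ystar n) hm
  have hH1 : ∀ z, (0:X) ∈ M z → ∀ n, z ∈ Hset x₀ (x n) := by
    intro z hz n
    induction n with
    | zero =>
        show ⟪z - x 0, x₀ - x 0⟫ ≤ 0
        rw [hx0]
        simp
    | succ n ih =>
        have h := hproj n z ⟨ih, hH2 z hz n⟩
        show ⟪z - x (n+1), x₀ - x (n+1)⟫ ≤ 0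
        rw [real_inner_comm]; exact h
  have hD : ∀ z, (0:X) ∈ M z → ∀ n, z ∈ Hset x₀ (x n) ∩ Hset (x n) (xh n) :=
    fun z hz n => ⟨hH1 z hz n, hH2 z hz n⟩
  set B := ‖x₀ - z₀‖ with hB
  have hBd : ∀ n, ‖x₀ - x n‖ ≤ B := by
    intro n
    cases n with
    | zero => rw [hx0]; simp [hB]
    | succ n => exact (hQ n).2 z₀ (hD z₀ hz₀ n)
  have hmono : ∀ n, ‖x₀ - x n‖^2 + ‖x (n+1) - x n‖^2 ≤ ‖x₀ - x (n+1)‖^2 :=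
    fun n => key_ineq x₀ (x n) (x (n+1)) (hmemH1 n)
  have hpartial : ∀ n, ∑ k ∈ Finset.range n, ‖x (k+1) - x k‖^2 ≤ ‖x₀ - x n‖^2 := by
    intro n
    induction n with
    | zero => simpa using sq_nonneg ‖x₀ - x 0‖
    | succ n ih =>
        rw [Finset.sum_range_succ]
        have := hmono n
        linarith
  have hsum1 : Summable (fun n => ‖x (n+1) - x n‖^2) := by
    apply summable_of_sum_range_le (c := B^2) (fun n => by positivity)
    intro n
    refine le_trans (hpartial n) ?_
    have h1 := hBd n
    have h2 := norm_nonneg (x₀ - x n)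
    nlinarith
  have hcmp : ∀ n, ‖xh n - x n‖^2 ≤ ‖x (n+1) - x n‖^2 := by
    intro n
    have h := key_ineq (x n) (xh n) (x (n+1)) (hmemH2 n)
    have e1 : ‖x n - xh n‖ = ‖xh n - x n‖ := norm_sub_rev _ _
    have e2 : ‖x n - x (n+1)‖ = ‖x (n+1) - x n‖ := norm_sub_rev _ _
    rw [e1, e2] at h
    nlinarith [sq_nonneg ‖x (n+1) - xh n‖]
  have hsum2 : Summable (fun n => ‖xh n - x n‖^2) :=
    Summable.of_nonneg_of_le (fun n => by positivity) hcmp hsum1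
  refine ⟨⟨hsum1, hsum2⟩, ?_⟩
  intro hcluster
  set d : ℕ → ℝ := fun n => ‖x₀ - x n‖ with hd
  have hdnn : ∀ n, 0 ≤ d n := fun n => norm_nonneg _
  have hdmono : Monotone d := by
    apply monotone_nat_of_le_succ
    intro n
    have h1 := hmono n
    have h2 := sq_nonneg ‖x (n+1) - x n‖
    nlinarith [hdnn n, hdnn (n+1)]
  have hbdd : BddAbove (Set.range d) := ⟨B, by rintro r ⟨n, rfl⟩; exact hBd n⟩
  set l := ⨆ n, d n with hl
  have htend : Tendsto d atTop (𝓝 l) := tendsto_atTop_ciSup hdmono hbdd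
  have hdlel : ∀ n, d n ≤ l := fun n => le_ciSup hbdd n
  have hl0 : 0 ≤ l := le_trans (hdnn 0) (hdlel 0)
  have hxbd : ∀ n, ‖x n‖ ≤ ‖x₀‖ + B := by
    intro n
    have h1 : x n = x₀ - (x₀ - x n) := by abel
    rw [h1]
    refine le_trans (norm_sub_le _ _) ?_
    have := hBd n
    linarith
  obtain ⟨z, φ, hφ, hweak⟩ := exists_weak_subseq x (‖x₀‖ + B) hxbd
  have hzZ : (0:X) ∈ M z := hcluster z φ hφ hweak
  have hdw : ∀ w, (0:X) ∈ M w → ∀ n, d n ≤ ‖x₀ - w‖ := by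
    intro w hw n
    cases n with
    | zero =>
        show ‖x₀ - x 0‖ ≤ ‖x₀ - w‖
        rw [hx0]; simp
    | succ n => exact (hQ n).2 w (hD w hw n)
  have hllez : l ≤ ‖x₀ - z‖ := ciSup_le (hdw z hzZ)
  have hzlel : ‖x₀ - z‖ ≤ l := by
    have hw := hweak (x₀ - z)
    have hw2 : Tendsto (fun n => ⟪x₀ - x (φ n), x₀ - z⟫) atTop (𝓝 ⟪x₀ - z, x₀ - z⟫) := by
      have hconst : Tendsto (fun _ : ℕ => ⟪x₀, x₀ - z⟫) atTop (𝓝 ⟪x₀, x₀ - z⟫) :=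
        tendsto_const_nhds
      have := hconst.sub hw
      rw [inner_sub_left]
      simpa [inner_sub_left] using this
    have hle : ∀ n, ⟪x₀ - x (φ n), x₀ - z⟫ ≤ l * ‖x₀ - z‖ := by
      intro n
      calc ⟪x₀ - x (φ n), x₀ - z⟫ ≤ ‖x₀ - x (φ n)‖ * ‖x₀ - z‖ := real_inner_le_norm _ _
        _ ≤ l * ‖x₀ - z‖ := mul_le_mul_of_nonneg_right (hdlel (φ n)) (norm_nonneg _)
    have hlim := le_of_tendsto hw2 (Eventually.of_forall hle)
    rw [real_inner_self_eq_norm_sq] at hlim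
    nlinarith [norm_nonneg (x₀ - z)]
  have hzl : ‖x₀ - z‖ = l := le_antisymm hzlel hllez
  have hfin : ∀ n, ‖z - x (n+1)‖^2 ≤ l^2 - d (n+1)^2 := by
    intro n
    have h := hproj n z (hD z hzZ n)
    have h2 : ⟪z - x (n+1), x₀ - x (n+1)⟫ ≤ 0 := by
      rw [real_inner_comm]; exact h
    have h3 := key_ineq x₀ (x (n+1)) z h2
    rw [hzl] at h3
    have hdd : d (n+1) = ‖x₀ - x (n+1)‖ := rfl
    rw [hdd]
    linarith
  have hd2 : Tendsto (fun n => l^2 - d (n+1)^2) atTop (𝓝 0) := by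
    have h1 : Tendsto (fun n => d (n+1)) atTop (𝓝 l) := htend.comp (tendsto_add_atTop_nat 1)
    have h2 := h1.pow 2
    have h3 := (tendsto_const_nhds (x := l^2) (f := atTop (α := ℕ))).sub h2
    simpa using h3
  have hsq : Tendsto (fun n => ‖z - x (n+1)‖^2) atTop (𝓝 0) :=
    squeeze_zero (fun n => by positivity) hfin hd2
  have hnorm : Tendsto (fun n => ‖z - x (n+1)‖) atTop (𝓝 0) := by
    have h1 := hsq.sqrt
    simp only [Real.sqrt_sq (norm_nonneg _), Real.sqrt_zero] at h1
    exact h1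
  have hconv1 : Tendsto (fun n => x (n+1)) atTop (𝓝 z) := by
    rw [tendsto_iff_norm_sub_tendsto_zero]
    refine hnorm.congr fun n => ?_
    exact norm_sub_rev _ _
  refine ⟨z, hzZ, ?_, ?_⟩
  · intro w hw
    rw [hzl]
    exact ciSup_le (hdw w hw)
  · rw [← tendsto_add_atTop_iff_nat 1]
    exact hconv1
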